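/- (Vinberg's inequality) Let $\mathfrak{q}$ be a finite-dimensional Lie algebra over a field of characteristic zero and $\xi \in \mathfrak{q}^*$ arbitrary. Then $\mathrm{ind}\, \mathfrak{q}_\xi \ge \mathrm{ind}\, \mathfrak{q}$, where $\mathfrak{q}_\xi$ is the stabilizer of $\xi$ under the coadjoint action. -/

import Mathlib

/-- The stabilizer of `ξ ∈ q*` for the coadjoint action,
`q_ξ = {x ∈ q | ξ([x, q]) = 0}`, as a Lie subalgebra. -/
def coadjointStabilizer (k : Type*) [Field k] (q : Type*) [LieRing q] [LieAlgebra k q]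
    (ξ : Module.Dual k q) : LieSubalgebra k q where
  carrier := {x | ∀ y : q, ξ ⁅x, y⁆ = 0}
  add_mem' := by
    intro a b ha hb y
    rw [add_lie, map_add, ha y, hb y, add_zero]
  zero_mem' := by
    intro y
    rw [zero_lie, map_zero]
  smul_mem' := by
    intro c a ha y
    rw [smul_lie, map_smul, ha y, smul_zero]
  lie_mem' := by
    intro a b ha hb y
    rw [lie_lie, map_sub, ha ⁅b, y⁆, hb ⁅a, y⁆, sub_zero]

/-- The index of a Lie algebra: the minimal dimension of a coadjoint stabilizer
(equivalently, the transcendence degree of the field of invariant rational functions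
on `q*`). -/
noncomputable def lieIndex (k : Type*) [Field k] (q : Type*) [LieRing q] [LieAlgebra k q] :
    ℕ :=
  sInf {n : ℕ | ∃ ξ : Module.Dual k q, Module.finrank k (coadjointStabilizer k q ξ) = n}


section VinbergAux
open Module LinearMap Matrix Polynomial


variable {k : Type*} [Field k] {V : Type*} [AddCommGroup V] [Module k V]

/-- Gram matrix of a bilinear form on a family of vectors. -/
noncomputable def gram (D : V →ₗ[k] V →ₗ[k] k) {ι : Type*} (x : ι → V) :
    Matrix ι ι k := Matrix.of fun i j => D (x i) (x j)

/-- If the Gram matrix of a family is invertible, the rank of the form is at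
least the size of the family. -/
lemma card_le_rank_of_gram (D : V →ₗ[k] V →ₗ[k] k) [FiniteDimensional k V]
    {ι : Type*} [Fintype ι] [DecidableEq ι] (x : ι → V)
    (h : (gram D x).det ≠ 0) :
    Fintype.card ι ≤ finrank k (range D) := by
  have hli : LinearIndependent k (fun i => D (x i)) := by
    rw [Fintype.linearIndependent_iff]
    intro c hc i
    have h0 : (gram D x)ᵀ.mulVec c = 0 := by
      funext j
      have := congrArg (fun f => f (x j)) hc
      simpa [Matrix.mulVec, dotProduct, _root_.gram, mul_comm] using this
    have := Matrix.eq_zero_of_mulVec_eq_zero (by simpa [Matrix.det_transpose] using h) h0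
    exact congrFun this i
  calc Fintype.card ι = finrank k (Submodule.span k (Set.range fun i => D (x i))) :=
        (finrank_span_eq_card hli).symm
    _ ≤ finrank k (range D) := by
        apply Submodule.finrank_mono
        rw [Submodule.span_le]
        rintro _ ⟨i, rfl⟩
        exact LinearMap.mem_range_self _ _

/-- For a skew bilinear form of rank `m`, there are `m` vectors with invertible
Gram matrix. -/
lemma exists_gram_ne_zero (D : V →ₗ[k] V →ₗ[k] k) [FiniteDimensional k V]
    (hD : ∀ a b, D a b = - D b a) :
    ∃ u : Fin (finrank k (range D)) → V, (gram D u).det ≠ 0 := by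
  obtain ⟨W, hW⟩ := Submodule.exists_isCompl (ker D)
  have hdim : finrank k W = finrank k (range D) := by
    have h1 := Submodule.finrank_add_eq_of_isCompl hW
    have h2 := LinearMap.finrank_range_add_finrank_ker D
    omega
  let b : Basis (Fin (finrank k (range D))) k W := finBasisOfFinrankEq k W hdim
  refine ⟨fun i => (b i : V), ?_⟩
  intro hdet
  rw [← Matrix.exists_mulVec_eq_zero_iff] at hdet
  obtain ⟨c, hc, hmul⟩ := hdet
  apply hc
  set v : W := ∑ j, c j • b j with hv
  have hvV : (v : V) = ∑ j, c j • (b j : V) := by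
    simp [hv]
  have hDiv : ∀ i, D (b i : V) (v : V) = 0 := by
    intro i
    have := congrFun hmul i
    simp only [Matrix.mulVec, dotProduct, _root_.gram, Matrix.of_apply, Pi.zero_apply] at this
    rw [hvV]
    simp only [map_sum, _root_.map_smul, smul_eq_mul]
    simpa [mul_comm] using this
  -- D v vanishes on W
  have hDvW : (D (v : V)).comp W.subtype = 0 := by
    apply b.ext
    intro i
    simp only [coe_comp, Function.comp_apply, Submodule.coe_subtype, LinearMap.zero_apply]
    rw [hD]
    rw [hDiv i]
    exact neg_zero
  -- D v vanishes everywhere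
  have hvker : (v : V) ∈ ker D := by
    rw [mem_ker]
    ext y
    obtain ⟨u, w, hu, hw, rfl⟩ := Submodule.codisjoint_iff_exists_add_eq.mp hW.codisjoint y
    have h1 : D (v : V) u = 0 := by
      rw [hD]
      have : D u = 0 := hu
      rw [this]
      simp
    have h2 : D (v : V) w = 0 := by
      have := congrArg (fun f => f (⟨w, hw⟩ : W)) hDvW
      simpa using this
    simp [map_add, h1, h2]
  have hv0 : v = 0 := by
    have : (v : V) ∈ (ker D ⊓ W : Submodule k V) := ⟨hvker, v.2⟩
    rw [hW.inf_eq_bot] at this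
    exact Subtype.ext (by simpa using this)
  have hind := b.linearIndependent
  rw [Fintype.linearIndependent_iff] at hind
  funext j
  exact hind c (by rw [← hv, hv0]) j


lemma rank_add_rank_le [Infinite k] [FiniteDimensional k V]
    (B C : V →ₗ[k] V →ₗ[k] k)
    (hB : ∀ a b, B a b = - B b a) (hC : ∀ a b, C a b = - C b a)
    (p : Submodule k V) (hp : p = ker B) :
    ∃ s : k,
      finrank k (range B) + finrank k (range (C.compl₁₂ p.subtype p.subtype))
        ≤ finrank k (range (B + s • C)) := by
  classical
  set r := finrank k (range B) with hr
  set C' := C.compl₁₂ p.subtype p.subtype with hC'def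
  set m := finrank k (range C') with hm
  obtain ⟨w, hw⟩ := exists_gram_ne_zero B hB
  have hC'skew : ∀ a b, C' a b = - C' b a := fun a b => hC _ _
  obtain ⟨u, hu⟩ := exists_gram_ne_zero C' hC'skew
  let x : Fin r ⊕ Fin m → V := Sum.elim w (fun i => ((u i : V)))
  have hxker : ∀ i, (u i : V) ∈ ker B := fun i => hp ▸ (u i).2
  have hBu : ∀ i y, B (u i : V) y = 0 := by
    intro i y
    have h0 : B (u i : V) = 0 := hxker i
    rw [h0]; rfl
  -- polynomial matrix
  let M : Matrix (Fin r ⊕ Fin m) (Fin r ⊕ Fin m) k[X] :=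
    Matrix.of fun i j => Polynomial.C (B (x i) (x j)) + X * Polynomial.C (C (x i) (x j))
  -- the reduced matrix with X factored out of the second block of rows
  let M' : Matrix (Fin r ⊕ Fin m) (Fin r ⊕ Fin m) k[X] :=
    Matrix.of fun i j => Sum.elim
      (fun a => Polynomial.C (B (x (Sum.inl a)) (x j)) + X * Polynomial.C (C (x (Sum.inl a)) (x j)))
      (fun a => Polynomial.C (C (x (Sum.inr a)) (x j))) i
  have hx_inr : ∀ a, x (Sum.inr a) = (u a : V) := fun a => rfl
  have hfactor : M = Matrix.of fun i j => (Sum.elim (fun _ => (1 : k[X])) (fun _ => X) i) * M' i j := by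
    apply Matrix.ext
    intro i j
    cases i with
    | inl a => simp [M, M']
    | inr a =>
      show Polynomial.C (B (x (Sum.inr a)) (x j)) + X * Polynomial.C (C (x (Sum.inr a)) (x j))
          = X * Polynomial.C (C (x (Sum.inr a)) (x j))
      rw [hx_inr, hBu a (x j)]
      simp
  have hdetM : M.det = X ^ m * M'.det := by
    rw [hfactor, Matrix.det_mul_column]
    congr 1
    rw [Fintype.prod_sum_type]
    simp
  -- evaluation of M' at 0
  have hM'0 : M'.map (Polynomial.evalRingHom (0 : k)) =
      Matrix.fromBlocks (gram B w) 0 (Matrix.of fun i j => C (u i : V) (w j)) (gram C' u) := by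
    apply Matrix.ext
    intro i j
    cases i with
    | inl a =>
      cases j with
      | inl b => simp [M', Matrix.map_apply, _root_.gram, x]
      | inr b =>
        simp only [M', Matrix.map_apply, Matrix.of_apply, Sum.elim_inl, map_add, coe_evalRingHom,
          eval_add, eval_C, eval_mul, eval_X, zero_mul, add_zero, Matrix.fromBlocks_apply₁₂,
          Matrix.zero_apply]
        rw [hB, hx_inr, hBu b]
        exact neg_zero
    | inr a =>
      cases j with
      | inl b => simp [M', Matrix.map_apply, _root_.gram, x]
      | inr b => simp [M', Matrix.map_apply, _root_.gram, x, hC'def, LinearMap.compl₁₂_apply]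
  have hdetM' : M'.det ≠ 0 := by
    intro h0
    have : (M'.map (Polynomial.evalRingHom (0 : k))).det = 0 := by
      rw [← RingHom.mapMatrix_apply, ← RingHom.map_det, h0, map_zero]
    rw [hM'0, Matrix.det_fromBlocks_zero₁₂] at this
    exact (mul_ne_zero hw hu) this
  have hdetMne : M.det ≠ 0 := by
    rw [hdetM]
    exact mul_ne_zero (pow_ne_zero _ X_ne_zero) hdetM'
  -- choose a point where it doesn't vanish
  obtain ⟨s, hs⟩ := ((Polynomial.finite_setOf_isRoot hdetMne).infinite_compl).nonempty
  refine ⟨s, ?_⟩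
  have hgram : gram (B + s • C) x = M.map (Polynomial.evalRingHom s) := by
    apply Matrix.ext
    intro i j
    show (B + s • C) (x i) (x j) = Polynomial.eval s
      (Polynomial.C (B (x i) (x j)) + X * Polynomial.C (C (x i) (x j)))
    simp only [LinearMap.add_apply, LinearMap.smul_apply, smul_eq_mul, eval_add, eval_mul,
      eval_C, eval_X]
  have hdet : (gram (B + s • C) x).det ≠ 0 := by
    rw [hgram, ← RingHom.mapMatrix_apply, ← RingHom.map_det]
    simpa [Polynomial.IsRoot] using hs
  have := card_le_rank_of_gram (B + s • C) x hdet
  simpa using this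

end VinbergAux

section LieAux

open Module LinearMap Matrix Polynomial
variable (k : Type*) [Field k] (q : Type*) [LieRing q] [LieAlgebra k q]

/-- The bilinear form `(x, y) ↦ η ⁅x, y⁆`. -/
noncomputable def bform (η : Module.Dual k q) : q →ₗ[k] q →ₗ[k] k :=
  LinearMap.mk₂ k (fun x y => η ⁅x, y⁆)
    (fun x x' y => by rw [add_lie, map_add])
    (fun c x y => by rw [smul_lie, _root_.map_smul])
    (fun x y y' => by rw [lie_add, map_add])
    (fun c x y => by rw [lie_smul, _root_.map_smul])

lemma bform_apply (η : Module.Dual k q) (x y : q) : bform k q η x y = η ⁅x, y⁆ := rfl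

lemma bform_skew (η : Module.Dual k q) (x y : q) :
    bform k q η x y = - bform k q η y x := by
  rw [bform_apply, bform_apply, ← map_neg, lie_skew]

lemma stab_toSubmodule (η : Module.Dual k q) :
    (coadjointStabilizer k q η).toSubmodule = ker (bform k q η) := by
  ext x
  constructor
  · intro hx
    rw [mem_ker]
    ext y
    exact hx y
  · intro hx y
    exact congrFun (congrArg DFunLike.coe (mem_ker.mp hx)) y

lemma finrank_stab (η : Module.Dual k q) :
    finrank k (coadjointStabilizer k q η) = finrank k (ker (bform k q η)) := by
  rw [← stab_toSubmodule]
  rfl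


end LieAux

open Module LinearMap Matrix Polynomial in
/-- **Vinberg's inequality.** For a finite-dimensional Lie algebra `q` over a
field of characteristic zero and any `ξ ∈ q*`, one has `ind q_ξ ≥ ind q`. -/
theorem vinberg_inequality
    {k : Type*} [Field k] [CharZero k]
    {q : Type*} [LieRing q] [LieAlgebra k q] [Module.Finite k q]
    (ξ : Module.Dual k q) :
    lieIndex k (coadjointStabilizer k q ξ) ≥ lieIndex k q := by
  classical
  set a := coadjointStabilizer k q ξ with ha
  set n := finrank k q with hn
  -- pick ν achieving the index of a
  have hne : {m : ℕ | ∃ ν : Module.Dual k a, finrank k (coadjointStabilizer k a ν) = m}.Nonempty :=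
    ⟨_, 0, rfl⟩
  obtain ⟨ν, hν⟩ := Nat.sInf_mem hne
  -- extend ν to a functional η on q
  obtain ⟨W, hW⟩ := Submodule.exists_isCompl a.toSubmodule
  let pr : q →ₗ[k] a.toSubmodule := a.toSubmodule.linearProjOfIsCompl W hW
  let η : Module.Dual k q := ν ∘ₗ pr
  have hη : ∀ x : a, η (x : q) = ν x := by
    intro x
    show ν (pr (x : q)) = ν x
    congr 1
    exact Submodule.linearProjOfIsCompl_apply_left hW x
  -- the forms
  set B := bform k q ξ with hB
  set C := bform k q η with hC
  have hpker : a.toSubmodule = ker B := stab_toSubmodule k q ξ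
  -- restricted form equals the stabilizer form of ν on a
  have hrestr : bform k a ν = C.compl₁₂ a.toSubmodule.subtype a.toSubmodule.subtype := by
    ext x y
    show ν ⁅x, y⁆ = η ⁅(x : q), (y : q)⁆
    rw [← LieSubalgebra.coe_bracket, hη]
  obtain ⟨s, hs⟩ := rank_add_rank_le B C (bform_skew k q ξ) (bform_skew k q η)
    a.toSubmodule hpker
  -- dimension bookkeeping
  have e1 : finrank k (range B) + finrank k (ker B) = n := finrank_range_add_finrank_ker B
  have e2 : finrank k a = finrank k (ker B) := by
    rw [← hpker]; rfl
  set C' := C.compl₁₂ a.toSubmodule.subtype a.toSubmodule.subtype with hC'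
  have e3 : finrank k (range C') + finrank k (ker C') = finrank k a :=
    finrank_range_add_finrank_ker C'
  have e4 : finrank k (coadjointStabilizer k a ν) = finrank k (ker C') := by
    rw [finrank_stab, hrestr]
    rfl
  -- the functional ξ + s • η
  have hform : bform k q (ξ + s • η) = B + s • C := by
    ext x y
    show (ξ + s • η) ⁅x, y⁆ = B x y + s • C x y
    simp [hB, hC, bform_apply]
  have e5 : finrank k (range (B + s • C)) + finrank k (ker (B + s • C)) = n :=
    finrank_range_add_finrank_ker _
  have hle : lieIndex k q ≤ finrank k (coadjointStabilizer k q (ξ + s • η)) :=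
    Nat.sInf_le ⟨ξ + s • η, rfl⟩
  have e6 : finrank k (coadjointStabilizer k q (ξ + s • η)) = finrank k (ker (B + s • C)) := by
    rw [finrank_stab, hform]
  have hrange : finrank k (range (B + s • C)) ≤ n := by omega
  have hidx : lieIndex k a = finrank k (coadjointStabilizer k a ν) := by
    rw [lieIndex]
    exact hν.symm
  rw [ge_iff_le, hidx, e4]
  omega
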